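/- Let H be a finite bipartite graph with parts X and T in which every vertex of T has a neighbor, and suppose A ⊆ T is a set of minimum cardinality with |N_H(A)| < |A|. Then the induced subgraph on A ∪ N_H(A) contains a matching saturating N_H(A). -/

import Mathlib

open SimpleGraph

namespace VizingTwoFactor

variable {V : Type*}

/-- The degree of a vertex, as the `ncard` of its neighbor set. -/
noncomputable def ndeg (G : SimpleGraph V) (v : V) : ℕ :=
  (G.neighborSet v).ncard

/-- `G` is bipartite with parts `X` and `T`. -/
def IsBipartiteWith (G : SimpleGraph V) (X T : Set V) : Prop :=
  Disjoint X T ∧ ∀ u v : V, G.Adj u v → (u ∈ X ∧ v ∈ T) ∨ (u ∈ T ∧ v ∈ X)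

/-- The set of neighbors of a set of vertices. -/
def NSet (G : SimpleGraph V) (A : Set V) : Set V :=
  {v | ∃ a ∈ A, G.Adj a v}

/-- `G` has a matching saturating the vertex set `T`. -/
def HasMatchingSaturating (G : SimpleGraph V) (T : Set V) : Prop :=
  ∃ M : G.Subgraph, M.IsMatching ∧ T ⊆ M.verts

/-- Number of (ordered) adjacent pairs with first coordinate in `A` and second in `B`;
for disjoint `A`, `B` this is the number of edges between `A` and `B`. -/
noncomputable def eBetween (G : SimpleGraph V) (A B : Set V) : ℕ :=
  {p : V × V | p.1 ∈ A ∧ p.2 ∈ B ∧ G.Adj p.1 p.2}.ncard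

/-- Number of neighbors of `v` inside `A`. -/
noncomputable def degIn (G : SimpleGraph V) (A : Set V) (v : V) : ℕ :=
  (G.neighborSet v ∩ A).ncard

/-- The vertex set (in `V`) of a connected component of an induced subgraph. -/
def csupp (G : SimpleGraph V) (U : Set V) (C : (G.induce U).ConnectedComponent) : Set V :=
  Subtype.val '' C.supp

/-- The odd components of `G − (S ∪ T)` w.r.t. `(S,T)`: components sending an odd
number of edges to `T`. -/
noncomputable def oddComps (G : SimpleGraph V) (S T : Set V) :
    Set ((G.induce (S ∪ T)ᶜ).ConnectedComponent) :=
  {C | Odd (eBetween G (csupp G (S ∪ T)ᶜ C) T)}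

/-- `h_G(S,T)`: the number of odd components. -/
noncomputable def hNum (G : SimpleGraph V) (S T : Set V) : ℕ :=
  (oddComps G S T).ncard

/-- `δ_G(S,T) = 2|S| + Σ_{v∈T} deg_{G−S}(v) − 2|T| − h_G(S,T)`. -/
noncomputable def deltaST (G : SimpleGraph V) (S T : Set V) : ℤ :=
  2 * S.ncard + (∑ᶠ v ∈ T, (degIn G Sᶜ v : ℤ)) - 2 * T.ncard - hNum G S T

/-- A barrier. -/
def IsBarrier (G : SimpleGraph V) (S T : Set V) : Prop :=
  Disjoint S T ∧ deltaST G S T ≤ -2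

/-- A minimum barrier: minimizes `|S ∪ T|` among barriers. -/
def IsMinBarrier (G : SimpleGraph V) (S T : Set V) : Prop :=
  IsBarrier G S T ∧ ∀ S' T' : Set V, IsBarrier G S' T' → (S ∪ T).ncard ≤ (S' ∪ T').ncard

/-- `G` has a 2-factor: a spanning subgraph in which every vertex has degree 2. -/
def HasTwoFactor (G : SimpleGraph V) : Prop :=
  ∃ H : SimpleGraph V, H ≤ G ∧ ∀ v : V, ndeg H v = 2

/-- `G` has a proper edge coloring with `k` colors. -/
def HasEdgeColoring (G : SimpleGraph V) (k : ℕ) : Prop :=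
  ∃ f : G.edgeSet → Fin k, ∀ e₁ e₂ : G.edgeSet, e₁ ≠ e₂ →
    (∃ v : V, v ∈ (e₁ : Sym2 V) ∧ v ∈ (e₂ : Sym2 V)) → f e₁ ≠ f e₂

/-- The chromatic index `χ'(G)`. -/
noncomputable def chromIdx (G : SimpleGraph V) : ℕ :=
  sInf {k | HasEdgeColoring G k}

/-- `Δ` is the maximum degree of `G`. -/
def IsMaxDegree (G : SimpleGraph V) (Δ : ℕ) : Prop :=
  (∀ v : V, ndeg G v ≤ Δ) ∧ ∃ v : V, ndeg G v = Δ

/-- `G` is `Δ`-critical: no isolated vertices, maximum degree `Δ`, `χ'(G) = Δ + 1`, and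
`χ'(G − e) = Δ` for every edge `e`. -/
def IsDeltaCritical (G : SimpleGraph V) (Δ : ℕ) : Prop :=
  (∀ v : V, ∃ u : V, G.Adj v u) ∧ IsMaxDegree G Δ ∧ chromIdx G = Δ + 1 ∧
    ∀ e ∈ G.edgeSet, chromIdx (G.deleteEdges {e}) = Δ

/-- `T` is an independent set in `G`. -/
def IsIndep (G : SimpleGraph V) (T : Set V) : Prop :=
  ∀ u ∈ T, ∀ v ∈ T, ¬ G.Adj u v

/-- The bipartite graph `H*` consisting of the edges of `G` between `V(G) \ T` and `T`. -/
def betweenGraph (G : SimpleGraph V) (T : Set V) : SimpleGraph V where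
  Adj u v := G.Adj u v ∧ ((u ∉ T ∧ v ∈ T) ∨ (u ∈ T ∧ v ∉ T))
  symm := ⟨fun u v (h : G.Adj u v ∧ ((u ∉ T ∧ v ∈ T) ∨ (u ∈ T ∧ v ∉ T))) =>
    ⟨h.1.symm, h.2.elim (fun h' => Or.inr ⟨h'.2, h'.1⟩)
    (fun h' => Or.inl ⟨h'.2, h'.1⟩)⟩⟩
  loopless := ⟨fun u h => G.loopless.irrefl u h.1⟩

theorem vizing_stmt_17 [Fintype V] (H : SimpleGraph V) (X T : Set V)
    (hbip : IsBipartiteWith H X T)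
    (hnoiso : ∀ y ∈ T, ∃ x : V, H.Adj y x)
    (A : Set V) (hA : A ⊆ T) (hne : A.Nonempty)
    (hcard : (NSet H A).ncard < A.ncard)
    (hmin : ∀ A' : Set V, A' ⊆ T → A'.Nonempty →
      (NSet H A').ncard < A'.ncard → A.ncard ≤ A'.ncard) :
    HasMatchingSaturating (H.induce (A ∪ NSet H A))
      (Subtype.val ⁻¹' NSet H A) := by
  classical
  obtain ⟨hXT, hadj⟩ := hbip
  set N := NSet H A with hN
  have hNX : ∀ v ∈ N, v ∉ T := by
    intro v hv hvT
    obtain ⟨a, haA, hav⟩ := hv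
    rcases hadj a v hav with ⟨haX, -⟩ | ⟨-, hvX⟩
    · exact hXT.ne_of_mem haX (hA haA) rfl
    · exact hXT.ne_of_mem hvX hvT rfl
  have hNA : ∀ v ∈ N, v ∉ A := fun v hv hvA => hNX v hv (hA hvA)
  -- Hall condition and injective choice
  have hall : ∃ f : N → V, Function.Injective f ∧
      ∀ b : N, f b ∈ A ∧ H.Adj (f b) b := by
    have hhall : ∀ s : Finset N, s.card ≤
        (s.biUnion (fun b : N => Finset.univ.filter (fun a => a ∈ A ∧ H.Adj a (b : V)))).card := ?_
    · obtain ⟨f, hinj, hf⟩ := (Finset.all_card_le_biUnion_card_iff_exists_injective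
        (fun b : N => Finset.univ.filter (fun a => a ∈ A ∧ H.Adj a (b : V)))).mp hhall
      exact ⟨f, hinj, fun b => by simpa using hf b⟩
    intro s
    by_contra hlt
    push_neg at hlt
    set t : N → Finset V := fun b => Finset.univ.filter (fun a => a ∈ A ∧ H.Adj a (b : V))
    set B : Set V := ↑(s.image Subtype.val) with hB
    set P : Set V := ↑(s.biUnion t) with hP
    have hBcard : B.ncard = s.card := by
      rw [hB, Set.ncard_coe_finset, Finset.card_image_of_injective _ Subtype.val_injective]
    have hPcard : P.ncard = (s.biUnion t).card := by rw [hP, Set.ncard_coe_finset]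
    have hBN : B ⊆ N := by
      intro v hv
      simp only [hB, Finset.coe_image, Set.mem_image, Finset.mem_coe] at hv
      obtain ⟨b, -, rfl⟩ := hv
      exact b.2
    have hPA : P ⊆ A := by
      intro v hv
      simp only [hP, Finset.coe_biUnion, Set.mem_iUnion, Finset.mem_coe, t,
        Finset.mem_filter] at hv
      obtain ⟨b, -, -, hvA, -⟩ := hv
      exact hvA
    have hABP : ∀ a ∈ A, ∀ b ∈ B, H.Adj a b → a ∈ P := by
      intro a haA b hbB hab
      simp only [hB, Finset.coe_image, Set.mem_image, Finset.mem_coe] at hbB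
      obtain ⟨b', hb's, rfl⟩ := hbB
      simp only [hP, Finset.coe_biUnion, Set.mem_iUnion, Finset.mem_coe]
      exact ⟨b', hb's, by simp [t, haA, hab]⟩
    set A' : Set V := A \ P with hA'
    have hNA' : NSet H A' ⊆ N \ B := by
      rintro v ⟨a, ⟨haA, haP⟩, hav⟩
      refine ⟨⟨a, haA, hav⟩, fun hvB => haP (hABP a haA v hvB hav)⟩
    have hPlt : P.ncard < B.ncard := by omega
    have hBne : B.Nonempty := by
      rcases s.eq_empty_or_nonempty with rfl | ⟨b, hb⟩
      · simp at hlt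
      · exact ⟨b, by simp only [hB, Finset.coe_image]; exact ⟨b, hb, rfl⟩⟩
    have hPpos : 0 < P.ncard := by
      obtain ⟨b, hb⟩ := hBne
      obtain ⟨a, haA, hab⟩ := hBN hb
      exact (Set.ncard_pos (Set.toFinite _)).mpr ⟨a, hABP a haA b hb hab⟩
    have hA'ne : A'.Nonempty := by
      rcases Set.eq_empty_or_nonempty A' with h0 | h
      · exfalso
        have hAP : A = P := Set.Subset.antisymm
          (fun a ha => by
            by_contra haP
            exact (Set.eq_empty_iff_forall_notMem.mp h0) a ⟨ha, haP⟩) hPA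
        have h1 : B.ncard ≤ N.ncard := Set.ncard_le_ncard hBN (Set.toFinite _)
        have h2 : A.ncard = P.ncard := by rw [hAP]
        omega
      · exact h
    have h3 : (N \ B).ncard + B.ncard = N.ncard :=
      Set.ncard_diff_add_ncard_of_subset hBN (Set.toFinite _)
    have h4 : (NSet H A').ncard ≤ (N \ B).ncard :=
      Set.ncard_le_ncard hNA' (Set.toFinite _)
    have h5 : A'.ncard + P.ncard = A.ncard :=
      Set.ncard_diff_add_ncard_of_subset hPA (Set.toFinite _)
    have h6 : (NSet H A').ncard < A'.ncard := by omega
    have h7 := hmin A' (fun a ha => hA ha.1) hA'ne h6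
    omega
  obtain ⟨f, hinj, hf⟩ := hall
  -- Build the matching
  set U : Set V := A ∪ N with hU
  set G' : SimpleGraph U := H.induce U with hG'
  have hG'adj : ∀ u v : U, G'.Adj u v ↔ H.Adj (u : V) (v : V) := fun u v => Iff.rfl
  set S : Set U := Subtype.val ⁻¹' N with hS
  set g : U → U := fun w =>
    if h : (w : V) ∈ N then ⟨f ⟨w, h⟩, Or.inl (hf ⟨w, h⟩).1⟩ else w with hg
  have hgval : ∀ (w : U) (h : (w : V) ∈ N), (g w : V) = f ⟨w, h⟩ := by
    intro w h; simp [hg, h]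
  have hgA : ∀ (w : U), (w : V) ∈ N → (g w : V) ∈ A := by
    intro w h; rw [hgval w h]; exact (hf ⟨w, h⟩).1
  have hgadj : ∀ (w : U), (w : V) ∈ N → H.Adj (g w : V) (w : V) := by
    intro w h; rw [hgval w h]; exact (hf ⟨w, h⟩).2
  have hginj : ∀ u v : U, (u : V) ∈ N → (v : V) ∈ N → g u = g v → u = v := by
    intro u v hu hv huv
    have : f ⟨u, hu⟩ = f ⟨v, hv⟩ := by
      rw [← hgval u hu, ← hgval v hv, huv]
    have h2 : (u : V) = (v : V) := by
      have h3 := hinj this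
      injection h3
    exact Subtype.ext h2
  have hgnotN : ∀ (w : U), (w : V) ∈ N → (g w : V) ∉ N := by
    intro w h hc
    exact hNA _ hc (hgA w h)
  refine ⟨⟨S ∪ g '' S, fun u v => ((u : V) ∈ N ∧ v = g u) ∨ ((v : V) ∈ N ∧ u = g v),
    ?_, ?_, ?_⟩, ?_, ?_⟩
  · rintro u v (⟨hu, rfl⟩ | ⟨hv, rfl⟩)
    · exact ((hgadj u hu).symm : H.Adj (u : V) _)
    · exact (hgadj v hv : H.Adj _ (v : V))
  · rintro u v (⟨hu, rfl⟩ | ⟨hv, rfl⟩)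
    · exact Or.inl hu
    · exact Or.inr ⟨v, hv, rfl⟩
  · constructor
    rintro u v (⟨hu, rfl⟩ | ⟨hv, rfl⟩)
    · exact Or.inr ⟨hu, rfl⟩
    · exact Or.inl ⟨hv, rfl⟩
  · -- IsMatching
    rintro v (hv | ⟨w, hw, rfl⟩)
    · refine ⟨g v, Or.inl ⟨hv, rfl⟩, ?_⟩
      rintro u (⟨-, rfl⟩ | ⟨hu, rfl⟩)
      · rfl
      · exact absurd (hgA u hu) (hNA _ hv)
    · refine ⟨w, Or.inr ⟨hw, rfl⟩, ?_⟩
      rintro u (⟨hc, -⟩ | ⟨hu, hgu⟩)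
      · exact absurd hc (hgnotN w hw)
      · exact (hginj w u hw hu hgu).symm
  · exact fun w hw => Or.inl hw


end VizingTwoFactor
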